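/- Let X be a topological space and x₀ ∈ X. Define π₁^{fu}(X,x₀) as the intersection, over all fibrations p : E → X with path connected total space E having the unique path lifting property (upl) and all points e ∈ p⁻¹(x₀), of the image subgroups p₊(π₁(E,e)) ≤ π₁(X,x₀); define π₁^{fwu}(X,x₀) analogously with fibrations having the weakly unique path homotopically lifting property (wuphl) in place of upl. Then π₁^{fwu}(X,x₀) and π₁^{fu}(X,x₀) are normal subgroups of π₁(X,x₀), and π₁^{fwu}(X,x₀) ≤ π₁^{fu}(X,x₀). -/

import Mathlib

universe u

open scoped unitInterval

/-- `p` has the unique path lifting property (upl). -/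
def Upl {E B : Type*} [TopologicalSpace E] [TopologicalSpace B] (p : C(E, B)) : Prop :=
  ∀ α β : C(unitInterval, E), α 0 = β 0 → p.comp α = p.comp β → α = β

/-- `p` has the weakly unique path homotopically lifting property (wuphl). -/
def Wuphl {E B : Type*} [TopologicalSpace E] [TopologicalSpace B] (p : C(E, B)) : Prop :=
  ∀ α β : C(unitInterval, E), α 0 = β 0 → α 1 = β 1 →
    (p.comp α).HomotopicRel (p.comp β) {0, 1} →
    α.HomotopicRel β {0, 1}

/-- `p` is a (Hurewicz) fibration: it has the homotopy lifting property with respect to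
every topological space. -/
def IsFibration {E B : Type*} [TopologicalSpace E] [TopologicalSpace B] (p : C(E, B)) : Prop :=
  ∀ (X : Type u) [TopologicalSpace X] (f : C(X, E)) (F : C(X × unitInterval, B)),
    (∀ x, F (x, 0) = p (f x)) →
    ∃ F' : C(X × unitInterval, E), (∀ z, p (F' z) = F z) ∧ (∀ x, F' (x, 0) = f x)

/-- The homomorphism induced by a continuous map `p` on fundamental groups. -/
noncomputable def inducedPi1Hom {E B : Type u} [TopologicalSpace E] [TopologicalSpace B]
    (p : C(E, B)) (e : E) :
    FundamentalGroup E e →* FundamentalGroup B (p e) :=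
  CategoryTheory.Functor.mapEnd _
    (FundamentalGroupoid.fundamentalGroupoidFunctor.map
      (X := TopCat.of E) (Y := TopCat.of B) (TopCat.ofHom p))

/-- The fu-subgroup: the intersection of the image subgroups of all fibrations with upl and
path connected total space over `X`. -/
noncomputable def pi1Fu (X : Type u) [TopologicalSpace X] (x₀ : X) :
    Subgroup (FundamentalGroup X x₀) :=
  sInf { H | ∃ (E : TopCat.{u}) (_ : PathConnectedSpace E) (p : C(E, X)) (e : E)
      (he : p e = x₀), IsFibration.{u} p ∧ Upl p ∧ H = he ▸ (inducedPi1Hom p e).range }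

/-- The fwu-subgroup: the intersection of the image subgroups of all fibrations with wuphl and
path connected total space over `X`. -/
noncomputable def pi1Fwu (X : Type u) [TopologicalSpace X] (x₀ : X) :
    Subgroup (FundamentalGroup X x₀) :=
  sInf { H | ∃ (E : TopCat.{u}) (_ : PathConnectedSpace E) (p : C(E, X)) (e : E)
      (he : p e = x₀), IsFibration.{u} p ∧ Wuphl p ∧ H = he ▸ (inducedPi1Hom p e).range }


namespace Pi1Aux
open CategoryTheory
attribute [local instance] Path.Homotopic.setoid
variable {E B : Type u} [TopologicalSpace E] [TopologicalSpace B]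

lemma exists_path_lift {p : C(E, B)} (hfib : IsFibration.{u} p) (e : E) {y : B}
    (γ : Path (p e) y) :
    ∃ (e' : E) (gl : Path e e'), p e' = y ∧ ∀ t, p (gl t) = γ t := by
  obtain ⟨F', hF'1, hF'2⟩ := hfib PUnit.{u+1} (ContinuousMap.const _ e)
    (γ.toContinuousMap.comp ⟨Prod.snd, continuous_snd⟩)
    (fun x => by simpa using γ.source)
  refine ⟨F' (PUnit.unit, 1),
    ⟨⟨fun t => F' (PUnit.unit, t), by fun_prop⟩, hF'2 _, rfl⟩, ?_, fun t => hF'1 _⟩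
  rw [hF'1]; simpa using γ.target

lemma quot_comp_eqToHom {a b c : B} (h : b = c) (rh : Path a b) (sg : Path a c)
    (hfn : ∀ t, rh t = sg t) :
    (⟦rh⟧ : FundamentalGroupoid.mk a ⟶ FundamentalGroupoid.mk b) ≫
      eqToHom (congrArg FundamentalGroupoid.mk h) = ⟦sg⟧ := by
  subst h
  simp only [eqToHom_refl, Category.comp_id]
  exact (Category.comp_id _).trans
    (congrArg (fun q => (⟦q⟧ : FundamentalGroupoid.mk a ⟶ FundamentalGroupoid.mk b))
      (Path.ext (funext hfn)))

lemma quot_comp_symm {a b : B} (rh : Path a b) :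
    (⟦rh⟧ : FundamentalGroupoid.mk a ⟶ FundamentalGroupoid.mk b) ≫ ⟦rh.symm⟧ =
      𝟙 (FundamentalGroupoid.mk a) :=
  show ⟦rh.trans rh.symm⟧ = ⟦Path.refl a⟧ from
    Quotient.sound ⟨(Path.Homotopy.reflTransSymm rh).symm⟩

lemma quot_symm_comp {a b : B} (rh : Path a b) :
    (⟦rh.symm⟧ : FundamentalGroupoid.mk b ⟶ FundamentalGroupoid.mk a) ≫ ⟦rh⟧ =
      𝟙 (FundamentalGroupoid.mk b) :=
  show ⟦rh.symm.trans rh⟧ = ⟦Path.refl b⟧ from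
    Quotient.sound ⟨(Path.Homotopy.reflSymmTrans rh).symm⟩

lemma mem_cast_iff {Y : Type u} [TopologicalSpace Y] {y z : Y} (h : y = z)
    (H : Subgroup (FundamentalGroup Y y)) (a : FundamentalGroup Y z) :
    a ∈ (h ▸ H : Subgroup (FundamentalGroup Y z)) ↔ ∃ b ∈ H,
      (a : FundamentalGroupoid.mk z ⟶ FundamentalGroupoid.mk z) =
      eqToHom (congrArg FundamentalGroupoid.mk h.symm) ≫
      (b : FundamentalGroupoid.mk y ⟶ FundamentalGroupoid.mk y) ≫
      eqToHom (congrArg FundamentalGroupoid.mk h) := by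
  subst h
  simp only [eqToHom_refl, Category.comp_id, Category.id_comp]
  exact ⟨fun ha => ⟨a, ha, rfl⟩, fun ⟨b, hb, hab⟩ => by rwa [show a = b from hab]⟩

lemma comp_eqToHom_aux {C : Type*} [Category C] {X Y Z : C} (f : X ⟶ Y) (d : Y ⟶ Y)
    (h : Y = Z) (g : Z ⟶ Z) :
    f ≫ d ≫ eqToHom h ≫ g = (f ≫ eqToHom h) ≫ (eqToHom h.symm ≫ d ≫ eqToHom h) ≫ g := by
  subst h
  simp

lemma conj_mem (p : C(E, B)) (e : E) (hfib : IsFibration.{u} p)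
    (g n : FundamentalGroup B (p e))
    (hn : ∀ (e' : E) (he' : p e' = p e), n ∈ he' ▸ (inducedPi1Hom p e').range) :
    g * n * g⁻¹ ∈ (inducedPi1Hom p e).range := by
  obtain ⟨γ, hγ⟩ := Quotient.exists_rep (g⁻¹ : FundamentalGroupoid.mk (p e) ⟶ _)
  obtain ⟨e', gl, he', hlift⟩ := exists_path_lift hfib e γ
  obtain ⟨b, hb, hnhom⟩ := (mem_cast_iff he' _ n).1 (hn e' he')
  obtain ⟨c, hc⟩ := MonoidHom.mem_range.1 hb
  obtain ⟨δ, hδ⟩ := Quotient.exists_rep (c : FundamentalGroupoid.mk e' ⟶ _)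
  refine ⟨⟦gl.trans (δ.trans gl.symm)⟧, ?_⟩
  show (⟦(gl.trans (δ.trans gl.symm)).map p.continuous⟧ :
    FundamentalGroupoid.mk (p e) ⟶ FundamentalGroupoid.mk (p e)) = _
  have hsplit : (gl.trans (δ.trans gl.symm)).map p.continuous
      = (gl.map p.continuous).trans ((δ.map p.continuous).trans ((gl.map p.continuous).symm)) := by
    simp [Path.map_trans, Path.map_symm]
  rw [hsplit]
  have key1 : (⟦gl.map p.continuous⟧ : FundamentalGroupoid.mk (p e) ⟶ FundamentalGroupoid.mk (p e'))
      ≫ eqToHom (congrArg FundamentalGroupoid.mk he') = g⁻¹ := by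
    rw [← hγ]; exact quot_comp_eqToHom he' _ γ (fun t => hlift t)
  have hbhom : b = (⟦δ.map p.continuous⟧ :
      FundamentalGroupoid.mk (p e') ⟶ FundamentalGroupoid.mk (p e')) := by
    rw [← hc]
    rw [← hδ]
    rfl
  have hsub : (⟦(gl.map p.continuous).symm⟧ :
      FundamentalGroupoid.mk (p e') ⟶ FundamentalGroupoid.mk (p e)) =
      eqToHom (congrArg FundamentalGroupoid.mk he') ≫ g := by
    refine (cancel_epi (show FundamentalGroupoid.mk (p e) ⟶ FundamentalGroupoid.mk (p e') from
      ⟦gl.map p.continuous⟧)).1 ?_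
    rw [quot_comp_symm, ← Category.assoc]
    rw [show ((show FundamentalGroupoid.mk (p e) ⟶ FundamentalGroupoid.mk (p e') from
      ⟦gl.map p.continuous⟧) ≫ eqToHom (congrArg FundamentalGroupoid.mk he')) = g⁻¹ from key1]
    exact (Groupoid.inv_comp g).symm
  show (⟦gl.map p.continuous⟧ : FundamentalGroupoid.mk (p e) ⟶ FundamentalGroupoid.mk (p e')) ≫
      ⟦δ.map p.continuous⟧ ≫ ⟦(gl.map p.continuous).symm⟧ = g⁻¹ ≫ n ≫ g
  rw [hsub, hnhom, hbhom, ← key1]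
  exact comp_eqToHom_aux (C := FundamentalGroupoid B)
    (⟦gl.map p.continuous⟧ : FundamentalGroupoid.mk (p e) ⟶ FundamentalGroupoid.mk (p e'))
    (⟦δ.map p.continuous⟧ : FundamentalGroupoid.mk (p e') ⟶ FundamentalGroupoid.mk (p e'))
    (congrArg FundamentalGroupoid.mk he') g


lemma wuphl_of_upl {E B : Type u} [TopologicalSpace E] [TopologicalSpace B] {p : C(E, B)}
    (hfib : IsFibration.{u} p) (hupl : Upl p) : Wuphl p := by
  intro α β h0 h1 hhom
  obtain ⟨K⟩ := hhom
  obtain ⟨G', hG'1, hG'2⟩ := hfib (ULift.{u} unitInterval)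
    (α.comp ⟨fun x => x.down, continuous_uliftDown⟩)
    ((K : C(unitInterval × unitInterval, B)).comp ⟨fun z => (z.2, z.1.down), by fun_prop⟩)
    (fun x => by simpa using K.apply_zero x.down)
  have hmem0 : (0 : unitInterval) ∈ ({0, 1} : Set unitInterval) := by simp
  have hmem1 : (1 : unitInterval) ∈ ({0, 1} : Set unitInterval) := by simp
  -- left edge is constant
  have hl : (⟨fun t => G' (⟨0⟩, t), by fun_prop⟩ : C(unitInterval, E)) =
      ContinuousMap.const unitInterval (α 0) := by
    apply hupl
    · simpa using hG'2 ⟨0⟩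
    · ext t
      show p (G' (⟨0⟩, t)) = p (α 0)
      rw [hG'1]
      simpa using K.eq_fst t hmem0
  have hr : (⟨fun t => G' (⟨1⟩, t), by fun_prop⟩ : C(unitInterval, E)) =
      ContinuousMap.const unitInterval (α 1) := by
    apply hupl
    · simpa using hG'2 ⟨1⟩
    · ext t
      show p (G' (⟨1⟩, t)) = p (α 1)
      rw [hG'1]
      simpa using K.eq_fst t hmem1
  -- top edge is β
  have htop : (⟨fun s => G' (⟨s⟩, 1), G'.continuous.comp (continuous_uliftUp.prodMk continuous_const)⟩ :
      C(unitInterval, E)) = β := by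
    apply hupl
    · show G' (⟨0⟩, 1) = β 0
      have h := congrFun (congrArg DFunLike.coe hl) 1
      simp only [ContinuousMap.coe_mk, ContinuousMap.const_apply] at h
      rw [← h0]; exact h
    · ext s
      show p (G' (⟨s⟩, 1)) = p (β s)
      rw [hG'1]
      simpa using K.apply_one s
  refine ⟨⟨⟨⟨fun z => G' (⟨z.2⟩, z.1),
      G'.continuous.comp ((continuous_uliftUp.comp continuous_snd).prodMk continuous_fst)⟩, ?_, ?_⟩, ?_⟩⟩
  · intro s; exact hG'2 ⟨s⟩
  · intro s; exact congrFun (congrArg DFunLike.coe htop) s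
  · intro t s hs
    rcases hs with h | h
    · subst h
      exact congrFun (congrArg DFunLike.coe hl) t
    · simp only [Set.mem_singleton_iff] at h
      subst h
      exact congrFun (congrArg DFunLike.coe hr) t


lemma normal_sInf (X : Type u) [TopologicalSpace X] (x₀ : X)
    (Q : ∀ (E : TopCat.{u}), C(E, X) → Prop) :
    (sInf { H | ∃ (E : TopCat.{u}) (_ : PathConnectedSpace E) (p : C(E, X)) (e : E)
      (he : p e = x₀), IsFibration.{u} p ∧ Q E p ∧
        H = he ▸ (inducedPi1Hom p e).range }).Normal := by
  constructor
  intro n hn g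
  rw [Subgroup.mem_sInf] at hn ⊢
  rintro H ⟨E, hc, p, e, he, hfib, hQ, rfl⟩
  subst he
  show g * n * g⁻¹ ∈ (inducedPi1Hom p e).range
  exact conj_mem p e hfib g n (fun e' he' => hn _ ⟨E, hc, p, e', he', hfib, hQ, rfl⟩)

end Pi1Aux

theorem pi1Fwu_le_pi1Fu_and_normal (X : Type u) [TopologicalSpace X] (x₀ : X) :
    (pi1Fwu X x₀).Normal ∧ (pi1Fu X x₀).Normal ∧ pi1Fwu X x₀ ≤ pi1Fu X x₀ := by
  refine ⟨Pi1Aux.normal_sInf X x₀ (fun E p => Wuphl p),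
    Pi1Aux.normal_sInf X x₀ (fun E p => Upl p), ?_⟩
  exact sInf_le_sInf (fun H hH => by
    obtain ⟨E, hc, p, e, he, hfib, hupl, hH⟩ := hH
    exact ⟨E, hc, p, e, he, hfib, Pi1Aux.wuphl_of_upl hfib hupl, hH⟩)
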